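/- Let l be a natural number, γ ∈ [0,1], and x ∈ [−1,1]. Let P_l denote the l-th Legendre polynomial, defined by Rodrigues' formula P_l(x) = (1/(2^l · l!)) · d^l/dx^l (x² − 1)^l. Then |1 − P_l(x)| ≤ 2 · |1 − x|^γ · (l(l+1))^γ. -/

import Mathlib

open Real

/-- The `l`-th Legendre polynomial on `ℝ`, via Rodrigues' formula
`P_l(x) = (1/(2^l l!)) dˡ/dxˡ (x² − 1)ˡ`. -/
noncomputable def legendreP (l : ℕ) (x : ℝ) : ℝ :=
  (1 / (2^l * (Nat.factorial l : ℝ))) * iteratedDeriv l (fun y : ℝ => (y^2 - 1)^l) x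

open Polynomial

local notation "D" => Polynomial.derivative (R := ℝ)

lemma iterD_add (n : ℕ) (p q : ℝ[X]) : D^[n] (p + q) = D^[n] p + D^[n] q := by
  induction n generalizing p q with
  | zero => simp
  | succ n ih => simp [Function.iterate_succ_apply, ih]

lemma iterD_Cmul (n : ℕ) (a : ℝ) (p : ℝ[X]) : D^[n] (C a * p) = C a * D^[n] p :=
  Polynomial.iterate_derivative_C_mul a p n

lemma iterD_X_mul (n : ℕ) (p : ℝ[X]) :
    D^[n+1] (X * p) = X * D^[n+1] p + C ((n:ℝ)+1) * D^[n] p := by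
  induction n generalizing p with
  | zero => simp [derivative_mul]; ring
  | succ n ih =>
    have h1 : D^[n+1+1] (X * p) = D^[n+1] (D (X * p)) := Function.iterate_succ_apply ..
    have h2 : D^[n+1+1] p = D^[n+1] (D p) := Function.iterate_succ_apply ..
    have h3 : D^[n+1] p = D^[n] (D p) := Function.iterate_succ_apply ..
    rw [h1, h2, derivative_mul, derivative_X, one_mul, iterD_add, ih (D p), h3]
    simp only [Nat.cast_add, Nat.cast_one, C_add, C_1]
    ring

lemma derivative_quad : D (X^2 - 1) = C 2 * X := by
  simp [derivative_X_pow]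
  rw [show (2:ℝ) = 1 + 1 by norm_num, C_add, C_1]

lemma iterD_quad_mul (n : ℕ) (p : ℝ[X]) :
    D^[n+2] ((X^2 - 1) * p) = (X^2-1) * D^[n+2] p
      + C (2*((n:ℝ)+2)) * (X * D^[n+1] p) + C (((n:ℝ)+2)*((n:ℝ)+1)) * D^[n] p := by
  induction n generalizing p with
  | zero =>
    show D (D ((X^2-1) * p)) = _
    simp only [derivative_mul, derivative_sub, derivative_one, derivative_X_pow, derivative_X,
      derivative_add, derivative_ofNat, derivative_zero, map_add, map_sub, map_mul, map_ofNat,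
      C_eq_natCast, Function.iterate_succ_apply, Function.iterate_zero_apply, Function.iterate_one]
    push_cast
    simp
    ring
  | succ n ih =>
    have h1 : D^[n+1+2] ((X^2-1) * p) = D^[n+2] (D ((X^2-1) * p)) := Function.iterate_succ_apply ..
    have h2 : D^[n+1+2] p = D^[n+2] (D p) := Function.iterate_succ_apply ..
    have h3 : D^[n+2] p = D^[n+1] (D p) := Function.iterate_succ_apply ..
    have h4 : D^[n+1] p = D^[n] (D p) := Function.iterate_succ_apply ..
    rw [h1, h2, derivative_mul, derivative_quad,
      show C 2 * X * p = C 2 * (X * p) from by ring, iterD_add, iterD_Cmul,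
      iterD_X_mul (n+1) p, ih (D p), h3, h4]
    simp only [Nat.cast_add, Nat.cast_one, C_add, C_1, C_mul, map_ofNat]
    ring

lemma base_eq (m : ℕ) :
    (X^2 - 1) * D ((X^2-1)^(m+1)) = C (2*((m:ℝ)+1)) * (X * (X^2-1)^(m+1)) := by
  rw [derivative_pow, derivative_quad]
  push_cast
  simp only [Nat.cast_add, Nat.cast_one, C_add, C_1, C_mul, map_ofNat, Nat.add_sub_cancel]
  ring

lemma w_ode (m : ℕ) :
    (1 - X^2) * D (D (D^[m+1] ((X^2-1)^(m+1))))
      = C 2 * X * D (D^[m+1] ((X^2-1)^(m+1)))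
        - C (((m:ℝ)+1)*((m:ℝ)+2)) * D^[m+1] ((X^2-1)^(m+1)) := by
  set u : ℝ[X] := (X^2-1)^(m+1) with hu
  have key := congrArg (fun q => D^[m+2] q) (base_eq m)
  simp only [hu.symm] at key
  have ha : D^[m] (D u) = D^[m+1] u := (Function.iterate_succ_apply ..).symm
  have hb : D^[m+1] (D u) = D (D^[m+1] u) := by
    rw [← Function.iterate_succ_apply, Function.iterate_succ_apply']
  have hc : D^[m+2] (D u) = D (D (D^[m+1] u)) := by
    rw [← Function.iterate_succ_apply, Function.iterate_succ_apply',
      Function.iterate_succ_apply']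
  have hd : D^[m+2] u = D (D^[m+1] u) := Function.iterate_succ_apply' ..
  simp only [iterD_quad_mul m (D u), iterD_Cmul, iterD_X_mul (m+1) u, ha, hb, hc, hd] at key
  simp only [Nat.cast_add, Nat.cast_one, C_add, C_1, C_mul, map_ofNat] at key ⊢
  linear_combination -key

noncomputable def legPoly (l : ℕ) : ℝ[X] :=
  C (1 / (2^l * (Nat.factorial l : ℝ))) * D^[l] ((X^2 - 1)^l)

lemma legPoly_ode (l : ℕ) :
    (1 - X^2) * D (D (legPoly l))
      = C 2 * X * D (legPoly l) - C ((l:ℝ)*((l:ℝ)+1)) * legPoly l := by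
  cases l with
  | zero => simp [legPoly]
  | succ m =>
    have h := w_ode m
    unfold legPoly
    rw [derivative_C_mul, derivative_C_mul]
    push_cast
    rw [show ((m:ℝ)+1)*((m:ℝ)+1+1) = ((m:ℝ)+1)*((m:ℝ)+2) from by ring]
    linear_combination (C (1 / (2^(m+1) * ((Nat.factorial (m+1)) : ℝ)))) * h


lemma eval_iterD_pow_mul (n : ℕ) (a : ℝ) (q : ℝ[X]) :
    eval a (D^[n] ((X - C a)^n * q)) = n.factorial * eval a q := by
  induction n generalizing q with
  | zero => simp
  | succ n ih =>
    have h : D ((X - C a)^(n+1) * q)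
        = C ((n:ℝ)+1) * ((X - C a)^n * q) + (X - C a)^n * ((X - C a) * D q) := by
      rw [derivative_mul, derivative_pow, derivative_sub, derivative_X, derivative_C]
      push_cast
      ring
    rw [Function.iterate_succ_apply, h, iterD_add, iterD_Cmul, eval_add, eval_mul, eval_C,
      ih, ih]
    simp [Nat.factorial_succ]
    ring

lemma eval_iterD_pow_mul' (n : ℕ) (a : ℝ) (q : ℝ[X]) :
    eval a (D^[n+1] ((X - C a)^n * q)) = (n+1).factorial * eval a (D q) := by
  induction n generalizing q with
  | zero => simp
  | succ n ih =>
    have h : D ((X - C a)^(n+1) * q)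
        = C ((n:ℝ)+1) * ((X - C a)^n * q) + (X - C a)^n * ((X - C a) * D q) := by
      rw [derivative_mul, derivative_pow, derivative_sub, derivative_X, derivative_C]
      push_cast
      ring
    rw [Function.iterate_succ_apply, h, iterD_add, iterD_Cmul, eval_add, eval_mul, eval_C,
      ih, ih, derivative_mul, derivative_sub, derivative_X, derivative_C]
    simp [Nat.factorial_succ]
    ring

lemma quad_factor1 : ((X:ℝ[X])^2 - 1) = (X - C 1) * (X + C 1) := by
  simp only [C_1]; ring

lemma quad_factor2 : ((X:ℝ[X])^2 - 1) = (X - C (-1)) * (X - C 1) := by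
  simp only [C_1, map_neg]; ring

lemma eval_w_one (l : ℕ) : eval 1 (D^[l] ((X^2-1)^l)) = l.factorial * 2^l := by
  rw [quad_factor1, mul_pow, eval_iterD_pow_mul]
  norm_num

lemma eval_w_negone (l : ℕ) : eval (-1) (D^[l] ((X^2-1)^l)) = l.factorial * (-2)^l := by
  rw [quad_factor2, mul_pow, eval_iterD_pow_mul]
  norm_num

lemma eval_Dw_one (l : ℕ) :
    eval 1 (D^[l+1] ((X^2-1)^l)) = (l+1).factorial * ((l:ℝ) * 2^(l-1)) := by
  rw [quad_factor1, mul_pow, eval_iterD_pow_mul']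
  rw [derivative_pow, derivative_add, derivative_X, derivative_C]
  norm_num

lemma eval_Dw_negone (l : ℕ) :
    eval (-1) (D^[l+1] ((X^2-1)^l)) = (l+1).factorial * ((l:ℝ) * (-2)^(l-1)) := by
  rw [quad_factor2, mul_pow, eval_iterD_pow_mul']
  rw [derivative_pow, derivative_sub, derivative_X, derivative_C]
  norm_num

lemma two_pow_ne (l : ℕ) : ((2:ℝ)^l * (Nat.factorial l : ℝ)) ≠ 0 := by
  positivity

lemma legPoly_eval_one (l : ℕ) : eval 1 (legPoly l) = 1 := by
  unfold legPoly
  rw [eval_mul, eval_C, eval_w_one]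
  field_simp

lemma legPoly_eval_negone (l : ℕ) : eval (-1) (legPoly l) = (-1)^l := by
  unfold legPoly
  rw [eval_mul, eval_C, eval_w_negone, show ((-2:ℝ)) = (-1) * 2 from by norm_num, mul_pow]
  field_simp

lemma deriv_legPoly (l : ℕ) :
    D (legPoly l) = C (1 / (2^l * (Nat.factorial l : ℝ))) * D^[l+1] ((X^2 - 1)^l) := by
  unfold legPoly
  rw [derivative_C_mul, Function.iterate_succ_apply']

lemma legPoly_deriv_eval_one (l : ℕ) :
    eval 1 (D (legPoly l)) = (l:ℝ)*((l:ℝ)+1)/2 := by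
  rw [deriv_legPoly, eval_mul, eval_C, eval_Dw_one]
  cases l with
  | zero => simp
  | succ m =>
    rw [Nat.add_sub_cancel, Nat.factorial_succ (m+1), Nat.factorial_succ m, pow_succ]
    push_cast
    have h2 : (2:ℝ)^m ≠ 0 := by positivity
    have hf : ((Nat.factorial m : ℝ)) ≠ 0 := by positivity
    field_simp

lemma legPoly_deriv_eval_negone (l : ℕ) :
    eval (-1) (D (legPoly l)) = (-1)^(l+1) * ((l:ℝ)*((l:ℝ)+1)/2) := by
  rw [deriv_legPoly, eval_mul, eval_C, eval_Dw_negone]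
  cases l with
  | zero => simp
  | succ m =>
    rw [Nat.add_sub_cancel, Nat.factorial_succ (m+1), Nat.factorial_succ m, pow_succ,
      show ((-2:ℝ)) = (-1) * 2 from by norm_num, mul_pow, pow_succ (-1:ℝ) (m+1)]
    push_cast
    have h2 : (2:ℝ)^m ≠ 0 := by positivity
    have hf : ((Nat.factorial m : ℝ)) ≠ 0 := by positivity
    field_simp
    ring

lemma eval_le_endpoints (F G : ℝ[X]) (c : ℝ) (hc : 0 ≤ c)
    (hDF : D F = C c * X * (G * G)) {x : ℝ} (hx : x ∈ Set.Icc (-1:ℝ) 1) :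
    eval x F ≤ max (eval 1 F) (eval (-1) F) := by
  have hcont : Continuous fun y : ℝ => eval y F := F.continuous_aeval
  have hdiff : Differentiable ℝ fun y : ℝ => eval y F := F.differentiable
  have hderiv : ∀ y : ℝ, deriv (fun y : ℝ => eval y F) y = c * y * (eval y G)^2 := by
    intro y
    rw [Polynomial.deriv, hDF]
    simp [sq]
  have hmono : MonotoneOn (fun y : ℝ => eval y F) (Set.Icc 0 1) := by
    apply monotoneOn_of_deriv_nonneg (convex_Icc 0 1) hcont.continuousOn
      hdiff.differentiableOn
    intro y hy
    rw [interior_Icc] at hy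
    rw [hderiv]
    have : (0:ℝ) ≤ y := le_of_lt hy.1
    positivity
  have hanti : AntitoneOn (fun y : ℝ => eval y F) (Set.Icc (-1) 0) := by
    apply antitoneOn_of_deriv_nonpos (convex_Icc (-1) 0) hcont.continuousOn
      hdiff.differentiableOn
    intro y hy
    rw [interior_Icc] at hy
    rw [hderiv]
    have hy0 : y ≤ 0 := le_of_lt hy.2
    nlinarith [mul_nonpos_of_nonneg_of_nonpos (mul_nonneg hc (sq_nonneg (eval y G))) hy0]
  rcases le_total 0 x with h0 | h0
  · exact le_max_of_le_left
      (hmono (Set.mem_Icc.2 ⟨h0, hx.2⟩) (Set.mem_Icc.2 ⟨zero_le_one, le_refl 1⟩) hx.2)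
  · exact le_max_of_le_right
      (hanti (Set.mem_Icc.2 ⟨le_refl (-1:ℝ), by norm_num⟩) (Set.mem_Icc.2 ⟨hx.1, h0⟩) hx.1)

lemma legPoly_abs_le_one (l : ℕ) {x : ℝ} (hx : x ∈ Set.Icc (-1:ℝ) 1) :
    |eval x (legPoly l)| ≤ 1 := by
  cases l with
  | zero =>
    unfold legPoly
    norm_num
  | succ m =>
    set l := m + 1 with hl
    have hode := legPoly_ode l
    set F : ℝ[X] := C ((l:ℝ)*((l:ℝ)+1)) * (legPoly l * legPoly l)
      + (1 - X^2) * (D (legPoly l) * D (legPoly l)) with hF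
    have hDF : D F = C 2 * X * (D (legPoly l) * D (legPoly l)) := by
      rw [hF]
      simp only [derivative_add, derivative_mul, derivative_C_mul, derivative_sub,
        derivative_one, derivative_X_pow, derivative_X, derivative_C, Nat.cast_ofNat, map_ofNat] at hode ⊢
      linear_combination (2 * D (legPoly l)) * hode
    have hmax := eval_le_endpoints F (D (legPoly l)) 2 (by norm_num) hDF hx
    have he1 : eval 1 F = (l:ℝ)*((l:ℝ)+1) := by
      rw [hF]
      simp only [eval_add, eval_mul, eval_sub, eval_one, eval_pow, eval_C, eval_X,
        legPoly_eval_one]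
      ring
    have he2 : eval (-1) F = (l:ℝ)*((l:ℝ)+1) := by
      rw [hF]
      simp only [eval_add, eval_mul, eval_sub, eval_one, eval_pow, eval_C, eval_X,
        legPoly_eval_negone]
      have : ((-1:ℝ))^l * ((-1:ℝ))^l = 1 := by
        rw [← pow_add]
        exact Even.neg_one_pow ⟨l, rfl⟩
      rw [this]
      ring
    rw [he1, he2, max_self] at hmax
    have hevF : eval x F = (l:ℝ)*((l:ℝ)+1) * (eval x (legPoly l))^2
        + (1 - x^2) * (eval x (D (legPoly l)))^2 := by
      rw [hF]
      simp only [eval_add, eval_mul, eval_sub, eval_one, eval_pow, eval_C, eval_X]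
      ring
    have hx2 : (0:ℝ) ≤ (1 - x^2) * (eval x (D (legPoly l)))^2 := by
      have h1 : x^2 ≤ 1 := by nlinarith [hx.1, hx.2]
      have h2 : (0:ℝ) ≤ 1 - x^2 := by linarith
      positivity
    have hlpos : (0:ℝ) < (l:ℝ)*((l:ℝ)+1) := by
      have : (1:ℝ) ≤ (l:ℝ) := by
        have : 1 ≤ l := Nat.le_add_left 1 m
        exact_mod_cast this
      nlinarith
    have hsq : (eval x (legPoly l))^2 ≤ 1 := by
      rw [hevF] at hmax
      nlinarith
    exact abs_le.2 ⟨by nlinarith [sq_nonneg (eval x (legPoly l) + 1)],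
      by nlinarith [sq_nonneg (eval x (legPoly l) - 1)]⟩

lemma legPoly_one : legPoly 1 = X := by
  unfold legPoly
  simp [derivative_quad, Nat.factorial]
  rw [show (1:ℝ[X]) + 1 = C 2 by rw [show (2:ℝ) = 1 + 1 by norm_num, C_add, C_1]]
  rw [← mul_assoc, ← C_mul]
  norm_num

lemma legPoly_deriv_abs_le (l : ℕ) {x : ℝ} (hx : x ∈ Set.Icc (-1:ℝ) 1) :
    |eval x (D (legPoly l))| ≤ (l:ℝ)*((l:ℝ)+1)/2 := by
  match l with
  | 0 =>
    unfold legPoly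
    norm_num
  | 1 =>
    rw [legPoly_one]
    norm_num
  | (m+2) =>
    set l := m + 2 with hl
    have hode := legPoly_ode l
    have hode2 : (1 - X^2) * D (D (D (legPoly l)))
        = C 4 * X * D (D (legPoly l)) - C ((l:ℝ)*((l:ℝ)+1) - 2) * D (legPoly l) := by
      have h := congrArg (fun q => D q) hode
      simp only [derivative_mul, derivative_sub, derivative_one, derivative_X_pow,
        derivative_X, derivative_C, derivative_C_mul, derivative_ofNat, Nat.cast_ofNat,
        map_ofNat, map_sub] at h ⊢
      linear_combination h
    set μ : ℝ := (l:ℝ)*((l:ℝ)+1) - 2 with hμ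
    set F : ℝ[X] := C μ * (D (legPoly l) * D (legPoly l))
      + (1 - X^2) * (D (D (legPoly l)) * D (D (legPoly l))) with hF
    have hDF : D F = C 6 * X * (D (D (legPoly l)) * D (D (legPoly l))) := by
      rw [hF]
      simp only [derivative_add, derivative_mul, derivative_C_mul, derivative_sub,
        derivative_one, derivative_X_pow, derivative_X, derivative_C,
        Nat.cast_ofNat, map_ofNat] at hode2 ⊢
      linear_combination (2 * D (D (legPoly l))) * hode2
    have hmax := eval_le_endpoints F (D (D (legPoly l))) 6 (by norm_num) hDF hx
    have hb : ((l:ℝ)*((l:ℝ)+1)/2)^2 = (eval 1 (D (legPoly l)))^2 := by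
      rw [legPoly_deriv_eval_one]
    have hb2 : ((l:ℝ)*((l:ℝ)+1)/2)^2 = (eval (-1) (D (legPoly l)))^2 := by
      rw [legPoly_deriv_eval_negone, mul_pow, ← pow_mul, mul_comm (l+1) 2, pow_mul]
      norm_num
    have he1 : eval 1 F = μ * ((l:ℝ)*((l:ℝ)+1)/2)^2 := by
      rw [hF]
      simp only [eval_add, eval_mul, eval_sub, eval_one, eval_pow, eval_C, eval_X]
      rw [legPoly_deriv_eval_one]
      ring
    have he2 : eval (-1) F = μ * ((l:ℝ)*((l:ℝ)+1)/2)^2 := by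
      rw [hF]
      simp only [eval_add, eval_mul, eval_sub, eval_one, eval_pow, eval_C, eval_X]
      rw [show eval (-1) (D (legPoly l)) * eval (-1) (D (legPoly l))
        = (eval (-1) (D (legPoly l)))^2 from (pow_two _).symm, ← hb2]
      ring
    rw [he1, he2, max_self] at hmax
    have hevF : eval x F = μ * (eval x (D (legPoly l)))^2
        + (1 - x^2) * (eval x (D (D (legPoly l))))^2 := by
      rw [hF]
      simp only [eval_add, eval_mul, eval_sub, eval_one, eval_pow, eval_C, eval_X]
      ring
    have hx2 : (0:ℝ) ≤ (1 - x^2) * (eval x (D (D (legPoly l))))^2 := by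
      have h1 : x^2 ≤ 1 := by nlinarith [hx.1, hx.2]
      have h2 : (0:ℝ) ≤ 1 - x^2 := by linarith
      positivity
    have hμpos : (0:ℝ) < μ := by
      have h2l : (2:ℝ) ≤ (l:ℝ) := by exact_mod_cast Nat.le_add_left 2 m
      rw [hμ]
      nlinarith
    have hsq : (eval x (D (legPoly l)))^2 ≤ ((l:ℝ)*((l:ℝ)+1)/2)^2 := by
      rw [hevF] at hmax
      nlinarith
    have hpos : (0:ℝ) ≤ (l:ℝ)*((l:ℝ)+1)/2 := by positivity
    exact abs_le.2 ⟨by nlinarith [sq_nonneg (eval x (D (legPoly l)) + (l:ℝ)*((l:ℝ)+1)/2)],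
      by nlinarith [sq_nonneg (eval x (D (legPoly l)) - (l:ℝ)*((l:ℝ)+1)/2)]⟩

lemma iterD_eval (n : ℕ) (p : ℝ[X]) :
    iteratedDeriv n (fun y : ℝ => eval y p) = fun y : ℝ => eval y (D^[n] p) := by
  induction n with
  | zero => simp
  | succ n ih =>
    rw [iteratedDeriv_succ, ih, Function.iterate_succ_apply']
    funext y
    exact Polynomial.deriv (p := D^[n] p) (x := y)

lemma legendreP_eq (l : ℕ) (x : ℝ) : legendreP l x = eval x (legPoly l) := by
  unfold legendreP legPoly
  rw [eval_mul, eval_C]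
  congr 1
  have h : (fun y : ℝ => (y^2 - 1)^l) = fun y : ℝ => eval y ((X^2-1)^l) := by
    funext y; simp
  rw [h, iterD_eval]

lemma legPoly_lipschitz (l : ℕ) {x : ℝ} (hx : x ∈ Set.Icc (-1:ℝ) 1) :
    |1 - eval x (legPoly l)| ≤ ((l:ℝ)*((l:ℝ)+1)/2) * (1 - x) := by
  have key : ∀ z ∈ Set.Icc x 1, ‖eval z (legPoly l) - eval x (legPoly l)‖
      ≤ ((l:ℝ)*((l:ℝ)+1)/2) * (z - x) := by
    apply norm_image_sub_le_of_norm_deriv_le_segment'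
      (f' := fun y => eval y (D (legPoly l)))
    · intro y _
      exact ((legPoly l).hasDerivAt y).hasDerivWithinAt
    · intro y hy
      have hy' : y ∈ Set.Icc (-1:ℝ) 1 := ⟨le_trans hx.1 hy.1, le_of_lt hy.2⟩
      simpa using legPoly_deriv_abs_le l hy'
  have h1 := key 1 ⟨hx.2, le_refl 1⟩
  rw [legPoly_eval_one] at h1
  simpa using h1

/-- the interpolation bound `|1 − P_l(x)| ≤ 2 |1 − x|^γ (l(l+1))^γ`
for `γ ∈ [0,1]` and `x ∈ [−1,1]`. -/
theorem stmt_13 (l : ℕ) (γ : ℝ) (hγ : γ ∈ Set.Icc (0:ℝ) 1)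
    (x : ℝ) (hx : x ∈ Set.Icc (-1:ℝ) 1) :
    |1 - legendreP l x| ≤ 2 * |1 - x|^γ * ((l:ℝ)*((l:ℝ)+1))^γ := by
  obtain ⟨hγ0, hγ1⟩ := hγ
  have hx1 := hx.1
  have hx2 := hx.2
  rw [legendreP_eq]
  have habs : |1 - eval x (legPoly l)| ≤ 2 := by
    have h := abs_le.1 (legPoly_abs_le_one l hx)
    rw [abs_le]
    constructor <;> linarith [h.1, h.2]
  have hlip := legPoly_lipschitz l hx
  have h1x : |1 - x| = 1 - x := abs_of_nonneg (by linarith)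
  set t : ℝ := (1 - x) * ((l:ℝ)*((l:ℝ)+1)) with ht
  have ht0 : 0 ≤ t := mul_nonneg (by linarith) (by positivity)
  have hrhs : 2 * |1-x|^γ * ((l:ℝ)*((l:ℝ)+1))^γ = 2 * t^γ := by
    have hm : ((1-x) * ((l:ℝ)*((l:ℝ)+1)))^γ = (1-x)^γ * ((l:ℝ)*((l:ℝ)+1))^γ :=
      Real.mul_rpow (by linarith) (by positivity)
    rw [h1x, ht, hm]
    ring
  rw [hrhs]
  rcases le_or_gt 1 t with h | h
  · have h1 : (1:ℝ) ≤ t^γ := by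
      have := Real.rpow_le_rpow_of_exponent_le h hγ0
      rwa [Real.rpow_zero] at this
    linarith
  · have hle : t ≤ t^γ := by
      rcases eq_or_lt_of_le ht0 with h0 | h0
      · rw [← h0]
        exact le_trans (le_refl 0) (Real.rpow_nonneg le_rfl γ)
      · have := Real.rpow_le_rpow_of_exponent_ge h0 h.le hγ1
        rwa [Real.rpow_one] at this
    have heq : ((l:ℝ)*((l:ℝ)+1)/2) * (1-x) = t/2 := by rw [ht]; ring
    have htγ : 0 ≤ t^γ := Real.rpow_nonneg ht0 γ
    linarith
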